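/- Let p be a real polynomial in n variables that is homogeneous of degree d ≥ 1, let D ⊆ ℝⁿ be a homogeneous domain (x ∈ D implies γx ∈ D for every scalar γ ∈ ℝ), and suppose p_min,homo := inf { |p(x)| : x ∈ closure(D), ‖x‖₂ = 1 } > 0. Let p_comp be any real polynomial in n + k variables (x₁,…,xₙ, δ₁,…,δ_k) such that p_comp(x, 0) = p(x) for all x and such that, for each fixed δ, x ↦ p_comp(x, δ) is homogeneous of degree d in x (every monomial of p_comp has total degree exactly d in the x-variables). Then for every 0 < η < 1 there exists ε > 0 such that for all x ∈ D and all δ ∈ ℝᵏ with |δ_i| ≤ ε for every i, one has |p_comp(x, δ) − p(x)| ≤ η·|p(x)|. -/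

import Mathlib

open MvPolynomial

lemma sum_hom_eval {n k d : ℕ} (pcomp : MvPolynomial (Fin n ⊕ Fin k) ℝ)
    (hpchom : ∀ m ∈ pcomp.support, (∑ i : Fin n, m (Sum.inl i)) = d)
    (c : ℝ) (x : Fin n → ℝ) (δ : Fin k → ℝ) :
    eval (Sum.elim (c • x) δ) pcomp = c ^ d * eval (Sum.elim x δ) pcomp := by
  rw [eval_eq', eval_eq', Finset.mul_sum]
  refine Finset.sum_congr rfl fun m hm => ?_
  rw [Fintype.prod_sum_type, Fintype.prod_sum_type]
  simp only [Sum.elim_inl, Sum.elim_inr, Pi.smul_apply, smul_eq_mul, mul_pow]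
  rw [Finset.prod_mul_distrib, Finset.prod_pow_eq_pow_sum, hpchom m hm]
  ring

lemma hom_eval {n d : ℕ} (p : MvPolynomial (Fin n) ℝ) (hphom : p.IsHomogeneous d)
    (c : ℝ) (x : Fin n → ℝ) :
    eval (c • x) p = c ^ d * eval x p := by
  rw [eval_eq', eval_eq', Finset.mul_sum]
  refine Finset.sum_congr rfl fun m hm => ?_
  simp only [Pi.smul_apply, smul_eq_mul, mul_pow]
  rw [Finset.prod_mul_distrib, Finset.prod_pow_eq_pow_sum]
  have hdeg : (∑ i : Fin n, m i) = d := by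
    have h := hphom (mem_support_iff.mp hm)
    rw [← h]
    simp [Finsupp.weight_apply, Finsupp.sum]
    exact (Finset.sum_subset (Finset.subset_univ _) fun i _ hi => by
      simpa using Finsupp.notMem_support_iff.mp hi).symm
  rw [hdeg]; ring

/-- Accurate evaluation of a homogeneous polynomial on a homogeneous domain on which
`|p|` is bounded away from zero on the unit sphere: any homogeneous-in-`x` algorithm output
`p_comp(x, δ)` agreeing with `p` at `δ = 0` achieves relative error at most `η` on `D`
once the machine precision `ε` is small enough. -/
theorem stmt1 {n k d : ℕ} (hd1 : 1 ≤ d)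
    (p : MvPolynomial (Fin n) ℝ) (hphom : p.IsHomogeneous d)
    (D : Set (EuclideanSpace ℝ (Fin n)))
    (hDhom : ∀ x ∈ D, ∀ γ : ℝ, γ • x ∈ D)
    (hmin : 0 < sInf ((fun x : EuclideanSpace ℝ (Fin n) => |eval (fun i => x i) p|) ''
      {x : EuclideanSpace ℝ (Fin n) | x ∈ closure D ∧ ‖x‖ = 1}))
    (pcomp : MvPolynomial (Fin n ⊕ Fin k) ℝ)
    (hpc : ∀ x : Fin n → ℝ, eval (Sum.elim x 0) pcomp = eval x p)
    (hpchom : ∀ m ∈ pcomp.support, (∑ i : Fin n, m (Sum.inl i)) = d) :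
    ∀ η : ℝ, 0 < η → η < 1 →
      ∃ ε : ℝ, 0 < ε ∧ ∀ x ∈ D, ∀ δ : Fin k → ℝ, (∀ i, |δ i| ≤ ε) →
        |eval (Sum.elim (fun i => x i) δ) pcomp - eval (fun i => x i) p| ≤
          η * |eval (fun i => x i) p| := by
  intro η hη hη1
  set m : ℝ := sInf ((fun x : EuclideanSpace ℝ (Fin n) => |eval (fun i => x i) p|) ''
      {x : EuclideanSpace ℝ (Fin n) | x ∈ closure D ∧ ‖x‖ = 1}) with hm
  set K : Set (EuclideanSpace ℝ (Fin n)) :=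
      {x : EuclideanSpace ℝ (Fin n) | x ∈ closure D ∧ ‖x‖ = 1} with hK
  -- the error function
  set F : EuclideanSpace ℝ (Fin n) × (Fin k → ℝ) → ℝ :=
      fun z => eval (Sum.elim (fun i => z.1 i) z.2) pcomp - eval (fun i => z.1 i) p with hF
  have hFcont : Continuous F := by
    apply Continuous.sub
    · apply (MvPolynomial.continuous_eval pcomp).comp
      apply continuous_pi
      rintro (i | j)
      · exact (continuous_apply i).comp (by fun_prop)
      · exact (continuous_apply j).comp (continuous_snd)
    · apply (MvPolynomial.continuous_eval p).comp
      apply continuous_pi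
      intro i
      exact (continuous_apply i).comp (by fun_prop)
  have hKcomp : IsCompact K := by
    have : IsClosed K := isClosed_closure.inter (isClosed_eq continuous_norm continuous_const)
    refine Metric.isCompact_of_isClosed_isBounded this ?_
    apply Bornology.IsBounded.subset
      (Metric.isBounded_closedBall (x := (0:EuclideanSpace ℝ (Fin n))) (r := 1))
    intro x hx
    simp [Metric.mem_closedBall, dist_zero_right, hx.2.le]
  have hV : IsOpen {z : EuclideanSpace ℝ (Fin n) × (Fin k → ℝ) | |F z| < η * m} :=
    isOpen_lt (hFcont.abs) continuous_const
  have hsub : K ×ˢ ({0} : Set (Fin k → ℝ)) ⊆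
      {z : EuclideanSpace ℝ (Fin n) × (Fin k → ℝ) | |F z| < η * m} := by
    rintro ⟨x, δ⟩ ⟨hx, hδ⟩
    simp only [Set.mem_singleton_iff] at hδ
    subst hδ
    have : F (x, 0) = 0 := by
      simp only [hF]
      rw [hpc]
      ring
    simp only [Set.mem_setOf_eq, this, abs_zero]
    exact mul_pos hη hmin
  obtain ⟨U, V, hUo, hVo, hKU, h0V, hUV⟩ := generalized_tube_lemma hKcomp
    isCompact_singleton hV hsub
  obtain ⟨r, hr, hball⟩ := Metric.isOpen_iff.mp hVo 0 (h0V rfl)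
  refine ⟨r / 2, by linarith, ?_⟩
  intro x hxD δ hδ
  have hδV : δ ∈ V := by
    apply hball
    rw [Metric.mem_ball, dist_zero_right]
    have h1 : ‖δ‖ ≤ r / 2 := by
      apply (pi_norm_le_iff_of_nonneg (by linarith)).mpr
      intro i
      rw [Real.norm_eq_abs]
      exact hδ i
    linarith
  by_cases hx0 : x = 0
  · subst hx0
    have hx' : (fun i => (0 : EuclideanSpace ℝ (Fin n)) i) = (0 : Fin n → ℝ) := rfl
    have hp0 : eval (0 : Fin n → ℝ) p = 0 := by
      have := hom_eval p hphom 0 0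
      simpa [zero_pow (by omega : d ≠ 0)] using this
    have hpc0 : eval (Sum.elim (0 : Fin n → ℝ) δ) pcomp = 0 := by
      have := sum_hom_eval pcomp hpchom 0 0 δ
      simpa [zero_pow (by omega : d ≠ 0)] using this
    rw [hx', hp0, hpc0]
    simp
  · -- scale to the unit sphere
    have hxn : (0:ℝ) < ‖x‖ := norm_pos_iff.mpr hx0
    set u : EuclideanSpace ℝ (Fin n) := ‖x‖⁻¹ • x with hu
    have huD : u ∈ D := hDhom x hxD _
    have hunorm : ‖u‖ = 1 := by
      rw [hu, norm_smul, norm_inv, norm_norm, inv_mul_cancel₀ hxn.ne']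
    have huK : u ∈ K := ⟨subset_closure huD, hunorm⟩
    have huV : ((u, δ) : EuclideanSpace ℝ (Fin n) × (Fin k → ℝ)) ∈
        {z : EuclideanSpace ℝ (Fin n) × (Fin k → ℝ) | |F z| < η * m} :=
      hUV ⟨hKU huK, hδV⟩
    have hmle : m ≤ |eval (fun i => u i) p| := by
      apply csInf_le
      · exact ⟨0, fun y ⟨z, _, hz⟩ => hz ▸ abs_nonneg _⟩
      · exact ⟨u, huK, rfl⟩
    have hxu : (fun i => x i) = ‖x‖ • (fun i => u i) := by
      funext i
      simp only [hu, Pi.smul_apply, smul_eq_mul, PiLp.smul_apply, smul_eq_mul]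
      field_simp
    have key1 : eval (fun i => x i) p = ‖x‖ ^ d * eval (fun i => u i) p := by
      rw [hxu, hom_eval p hphom]
    have key2 : eval (Sum.elim (fun i => x i) δ) pcomp =
        ‖x‖ ^ d * eval (Sum.elim (fun i => u i) δ) pcomp := by
      rw [hxu, sum_hom_eval pcomp hpchom]
    rw [key1, key2, ← mul_sub, abs_mul, abs_of_nonneg (pow_nonneg hxn.le d)]
    calc ‖x‖ ^ d * |eval (Sum.elim (fun i => u i) δ) pcomp - eval (fun i => u i) p|
        ≤ ‖x‖ ^ d * (η * m) := by
          apply mul_le_mul_of_nonneg_left _ (pow_nonneg hxn.le d)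
          exact le_of_lt huV
      _ ≤ ‖x‖ ^ d * (η * |eval (fun i => u i) p|) := by
          apply mul_le_mul_of_nonneg_left _ (pow_nonneg hxn.le d)
          exact mul_le_mul_of_nonneg_left hmle hη.le
      _ = η * (‖x‖ ^ d * |eval (fun i => u i) p|) := by ring
      _ = η * |‖x‖ ^ d * eval (fun i => u i) p| := by
          rw [abs_mul, abs_of_nonneg (pow_nonneg hxn.le d)]
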